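/- Consider the integral equation x(t) = g(t) + ∫₀^t K(s, x(s)) ds on [0,1], with K : [0,1] × ℝⁿ → ℝⁿ and g : [0,1] → ℝⁿ continuous. Suppose there exist α ∈ (0,1/2], ψ ∈ Ψ, φ ∈ Φ_u, a C-class function F, and f : [0,∞) → (0,∞) integrable with ∫₀^ε f > 0 for all ε > 0, such that for all continuous x, y : [0,1] → ℝⁿ and all t, the inequality α·|x(t) − g(t) − ∫₀^t K(s,x(s))ds| ≤ |x(t) − y(t)| implies ψ(∫₀^{|K(t,x(t)) − K(t,y(t))|} f(λ)dλ) ≤ F(ψ(∫₀^{|x(t)−y(t)|} f(λ)dλ), φ(∫₀^{|x(t)−y(t)|} f(λ)dλ)). Then the integral equation has a unique continuous solution on [0,1]. -/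

import Mathlib

open MeasureTheory

/-- A C-class function. -/
def IsCClass (F : ℝ → ℝ → ℝ) : Prop :=
  ContinuousOn (fun p : ℝ × ℝ => F p.1 p.2) (Set.Ici 0 ×ˢ Set.Ici 0) ∧
  (∀ s t, 0 ≤ s → 0 ≤ t → F s t ≤ s) ∧
  (∀ s t, 0 ≤ s → 0 ≤ t → F s t = s → s = 0 ∨ t = 0)


private lemma picard_bound (u : ℕ → ℝ → ℝ) (M : ℝ)
    (hcont : ∀ n, ContinuousOn (u n) (Set.Icc 0 1))
    (h0 : ∀ t ∈ Set.Icc (0:ℝ) 1, u 0 t ≤ M)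
    (hrec : ∀ n, ∀ t ∈ Set.Icc (0:ℝ) 1, u (n+1) t ≤ ∫ s in (0:ℝ)..t, u n s) :
    ∀ n, ∀ t ∈ Set.Icc (0:ℝ) 1, u n t ≤ M * t ^ n / n.factorial := by
  intro n
  induction n with
  | zero => intro t ht; simpa using h0 t ht
  | succ n ih =>
    intro t ht
    obtain ⟨ht0, ht1⟩ := ht
    have hint1 : IntervalIntegrable (u n) volume 0 t := by
      apply ContinuousOn.intervalIntegrable
      apply (hcont n).mono
      rw [Set.uIcc_of_le ht0]
      exact Set.Icc_subset_Icc le_rfl ht1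
    have hint2 : IntervalIntegrable (fun s => M * s ^ n / n.factorial) volume 0 t := by
      apply Continuous.intervalIntegrable
      continuity
    calc u (n+1) t ≤ ∫ s in (0:ℝ)..t, u n s := hrec n t ⟨ht0, ht1⟩
      _ ≤ ∫ s in (0:ℝ)..t, M * s ^ n / n.factorial := by
          apply intervalIntegral.integral_mono_on ht0 hint1 hint2
          intro s hs
          exact ih s ⟨hs.1, hs.2.trans ht1⟩
      _ = M * t ^ (n+1) / (n+1).factorial := by
          have : (fun s : ℝ => M * s ^ n / n.factorial)
              = fun s : ℝ => (M / n.factorial) * s ^ n := by funext s; ring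
          rw [this, intervalIntegral.integral_const_mul, integral_pow, Nat.factorial_succ]
          push_cast
          rw [zero_pow (Nat.succ_ne_zero n), sub_zero, div_mul_div_comm,
            mul_comm ((n.factorial:ℝ)) ((n:ℝ)+1)]

theorem integral_equation_unique_solution
    (N : ℕ)
    (K : ℝ → EuclideanSpace ℝ (Fin N) → EuclideanSpace ℝ (Fin N))
    (g : ℝ → EuclideanSpace ℝ (Fin N))
    (hK : ContinuousOn (fun p : ℝ × EuclideanSpace ℝ (Fin N) => K p.1 p.2)
      (Set.Icc 0 1 ×ˢ Set.univ))
    (hg : ContinuousOn g (Set.Icc 0 1))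
    (α : ℝ) (hα0 : 0 < α) (hα : α ≤ 1 / 2)
    (F : ℝ → ℝ → ℝ) (hF : IsCClass F)
    (ψ : ℝ → ℝ)
    (hψ_cont : ContinuousOn ψ (Set.Ici 0))
    (hψ_mono : StrictMonoOn ψ (Set.Ici 0))
    (hψ_nonneg : ∀ t, 0 ≤ t → 0 ≤ ψ t)
    (hψ_zero : ∀ t, 0 ≤ t → (ψ t = 0 ↔ t = 0))
    (φ : ℝ → ℝ)
    (hφ_cont : ContinuousOn φ (Set.Ici 0))
    (hφ_pos : ∀ t, 0 < t → 0 < φ t)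
    (hφ_nonneg : ∀ t, 0 ≤ t → 0 ≤ φ t)
    (f : ℝ → ℝ)
    (hf_pos : ∀ t, 0 ≤ t → 0 < f t)
    (hf_int : ∀ b, 0 ≤ b → IntervalIntegrable f volume 0 b)
    (hf_eps : ∀ ε, 0 < ε → 0 < ∫ t in (0:ℝ)..ε, f t)
    (hyp : ∀ x y : ℝ → EuclideanSpace ℝ (Fin N),
      ContinuousOn x (Set.Icc 0 1) → ContinuousOn y (Set.Icc 0 1) →
      ∀ t ∈ Set.Icc (0:ℝ) 1,
        α * ‖x t - g t - ∫ s in (0:ℝ)..t, K s (x s)‖ ≤ ‖x t - y t‖ →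
        ψ (∫ lam in (0:ℝ)..‖K t (x t) - K t (y t)‖, f lam) ≤
          F (ψ (∫ lam in (0:ℝ)..‖x t - y t‖, f lam))
            (φ (∫ lam in (0:ℝ)..‖x t - y t‖, f lam))) :
    ∃ x : ℝ → EuclideanSpace ℝ (Fin N),
      (ContinuousOn x (Set.Icc 0 1) ∧
        ∀ t ∈ Set.Icc (0:ℝ) 1, x t = g t + ∫ s in (0:ℝ)..t, K s (x s)) ∧
      ∀ y : ℝ → EuclideanSpace ℝ (Fin N),
        ContinuousOn y (Set.Icc 0 1) →
        (∀ t ∈ Set.Icc (0:ℝ) 1, y t = g t + ∫ s in (0:ℝ)..t, K s (y s)) →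
        ∀ t ∈ Set.Icc (0:ℝ) 1, y t = x t := by
  classical
  have hIcc : ∀ t : ℝ, t ∈ Set.Icc (0:ℝ) 1 → 0 ≤ t ∧ t ≤ 1 := fun t ht => ⟨ht.1, ht.2⟩
  have hkey : ∀ u v : EuclideanSpace ℝ (Fin N), ‖v‖ ≤ ‖u‖ + dist u v := by
    intro u v
    rw [dist_eq_norm]
    calc ‖v‖ = ‖u - (u - v)‖ := by rw [sub_sub_cancel]
      _ ≤ ‖u‖ + ‖u - v‖ := norm_sub_le _ _
  -- nonnegativity of ∫₀^a f
  have hI_nonneg : ∀ a : ℝ, 0 ≤ a → 0 ≤ ∫ lam in (0:ℝ)..a, f lam := fun a ha =>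
    intervalIntegral.integral_nonneg ha (fun s hs => (hf_pos s hs.1).le)
  -- Key derived lemma: conditional 1-Lipschitz bound on K
  have hL : ∀ x y : ℝ → EuclideanSpace ℝ (Fin N),
      ContinuousOn x (Set.Icc 0 1) → ContinuousOn y (Set.Icc 0 1) →
      ∀ t ∈ Set.Icc (0:ℝ) 1,
        α * ‖x t - g t - ∫ s in (0:ℝ)..t, K s (x s)‖ ≤ ‖x t - y t‖ →
        ‖K t (x t) - K t (y t)‖ ≤ ‖x t - y t‖ := by
    intro x y hx hy t ht hcond
    by_contra hab
    push_neg at hab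
    set a := ‖K t (x t) - K t (y t)‖ with ha
    set b := ‖x t - y t‖ with hb
    have hb0 : (0:ℝ) ≤ b := norm_nonneg _
    have ha0 : (0:ℝ) ≤ a := norm_nonneg _
    have h1 := hyp x y hx hy t ht hcond
    have hIb := hI_nonneg b hb0
    have hIa := hI_nonneg a ha0
    have h2 : F (ψ (∫ lam in (0:ℝ)..b, f lam)) (φ (∫ lam in (0:ℝ)..b, f lam)) ≤
        ψ (∫ lam in (0:ℝ)..b, f lam) :=
      hF.2.1 _ _ (hψ_nonneg _ hIb) (hφ_nonneg _ hIb)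
    have hint_a := hf_int a ha0
    have hsub1 : Set.uIcc (0:ℝ) b ⊆ Set.uIcc (0:ℝ) a := by
      rw [Set.uIcc_of_le hb0, Set.uIcc_of_le ha0]
      exact Set.Icc_subset_Icc le_rfl hab.le
    have hsub2 : Set.uIcc b a ⊆ Set.uIcc (0:ℝ) a := by
      rw [Set.uIcc_of_le hab.le, Set.uIcc_of_le ha0]
      exact Set.Icc_subset_Icc hb0 le_rfl
    have hint1 : IntervalIntegrable f volume 0 b := hint_a.mono_set hsub1
    have hint2 : IntervalIntegrable f volume b a := hint_a.mono_set hsub2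
    have hpos : 0 < ∫ lam in b..a, f lam :=
      intervalIntegral.intervalIntegral_pos_of_pos_on hint2
        (fun s hs => hf_pos s (hb0.trans hs.1.le)) hab
    have hsum : (∫ lam in (0:ℝ)..b, f lam) + ∫ lam in b..a, f lam = ∫ lam in (0:ℝ)..a, f lam :=
      intervalIntegral.integral_add_adjacent_intervals hint1 hint2
    have hlt : (∫ lam in (0:ℝ)..b, f lam) < ∫ lam in (0:ℝ)..a, f lam := by linarith
    have h3 := hψ_mono (Set.mem_Ici.2 hIb) (Set.mem_Ici.2 hIa) hlt
    linarith
  -- clamp to [0,1]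
  set σ : ℝ → ℝ := fun t => max 0 (min t 1) with hσdef
  have hσ_cont : Continuous σ := continuous_const.max (continuous_id.min continuous_const)
  have hσ_mem : ∀ t, σ t ∈ Set.Icc (0:ℝ) 1 :=
    fun t => ⟨le_max_left _ _, max_le (by norm_num) (min_le_right _ _)⟩
  have hσ_id : ∀ t ∈ Set.Icc (0:ℝ) 1, σ t = t := by
    intro t ht
    simp [hσdef, min_eq_left ht.2, max_eq_right ht.1]
  -- the Picard operator
  set T : (ℝ → EuclideanSpace ℝ (Fin N)) → ℝ → EuclideanSpace ℝ (Fin N) :=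
    fun x t => g (σ t) + ∫ s in (0:ℝ)..σ t, K s (x s) with hTdef
  -- integrand continuity / integrability
  have hInt : ∀ x : ℝ → EuclideanSpace ℝ (Fin N), ContinuousOn x (Set.Icc 0 1) →
      ContinuousOn (fun s => K s (x s)) (Set.Icc 0 1) := by
    intro x hx
    exact hK.comp (continuousOn_id.prodMk hx) (fun s hs => ⟨hs, Set.mem_univ _⟩)
  have hIntInt : ∀ x : ℝ → EuclideanSpace ℝ (Fin N), ContinuousOn x (Set.Icc 0 1) →
      ∀ t ∈ Set.Icc (0:ℝ) 1, IntervalIntegrable (fun s => K s (x s)) volume 0 t := by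
    intro x hx t ht
    apply ContinuousOn.intervalIntegrable
    apply (hInt x hx).mono
    rw [Set.uIcc_of_le ht.1]
    exact Set.Icc_subset_Icc le_rfl ht.2
  -- T maps continuous functions to (globally) continuous functions
  have hTcont : ∀ x : ℝ → EuclideanSpace ℝ (Fin N), Continuous x → Continuous (T x) := by
    intro x hx
    have h1 : ContinuousOn (fun t => ∫ s in (0:ℝ)..t, K s (x s)) (Set.Icc 0 1) := by
      have := intervalIntegral.continuousOn_primitive_interval
        (f := fun s => K s (x s)) (a := (0:ℝ)) (b := 1) (μ := volume) ?_
      · simpa [Set.uIcc_of_le (zero_le_one : (0:ℝ) ≤ 1)] using this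
      · rw [Set.uIcc_of_le (zero_le_one : (0:ℝ) ≤ 1)]
        exact (hInt x hx.continuousOn).integrableOn_Icc
    have h2 : Continuous fun t => g (σ t) := hg.comp_continuous hσ_cont hσ_mem
    have h3 : Continuous fun t => ∫ s in (0:ℝ)..σ t, K s (x s) :=
      h1.comp_continuous hσ_cont hσ_mem
    exact h2.add h3
  have hTval : ∀ (x : ℝ → EuclideanSpace ℝ (Fin N)), ∀ t ∈ Set.Icc (0:ℝ) 1,
      T x t = g t + ∫ s in (0:ℝ)..t, K s (x s) := by
    intro x t ht
    simp only [hTdef, hσ_id t ht]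
  -- Picard iterates
  set X : ℕ → ℝ → EuclideanSpace ℝ (Fin N) := fun n => T^[n] (fun t => g (σ t)) with hXdef
  have hX0 : X 0 = fun t => g (σ t) := rfl
  have hXsucc : ∀ n, X (n + 1) = T (X n) := by
    intro n
    simp only [hXdef, Function.iterate_succ_apply']
  have hXcont : ∀ n, Continuous (X n) := by
    intro n
    induction n with
    | zero => exact hg.comp_continuous hσ_cont hσ_mem
    | succ n ih => rw [hXsucc]; exact hTcont _ ih
  have hXval : ∀ n, ∀ t ∈ Set.Icc (0:ℝ) 1,
      X (n + 1) t = g t + ∫ s in (0:ℝ)..t, K s (X n s) := by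
    intro n t ht
    rw [hXsucc]; exact hTval _ t ht
  -- the pointwise contraction along the iteration
  have hKlip : ∀ n, ∀ s ∈ Set.Icc (0:ℝ) 1,
      ‖K s (X n s) - K s (X (n+1) s)‖ ≤ ‖X n s - X (n+1) s‖ := by
    intro n s hs
    apply hL (X n) (X (n+1)) (hXcont n).continuousOn (hXcont (n+1)).continuousOn s hs
    have heq : X n s - g s - (∫ r in (0:ℝ)..s, K r (X n r)) = X n s - X (n+1) s := by
      rw [hXval n s hs]; abel
    rw [heq]
    have hnn : (0:ℝ) ≤ ‖X n s - X (n+1) s‖ := norm_nonneg _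
    nlinarith
  -- difference recurrence
  have hdiff_rec : ∀ n, ∀ t ∈ Set.Icc (0:ℝ) 1,
      ‖X (n+1) t - X (n+2) t‖ ≤ ∫ s in (0:ℝ)..t, ‖X n s - X (n+1) s‖ := by
    intro n t ht
    have h1 : X (n+1) t - X (n+2) t
        = ∫ s in (0:ℝ)..t, (K s (X n s) - K s (X (n+1) s)) := by
      rw [hXval n t ht, hXval (n+1) t ht,
        intervalIntegral.integral_sub (hIntInt _ (hXcont n).continuousOn t ht)
          (hIntInt _ (hXcont (n+1)).continuousOn t ht)]
      abel
    rw [h1]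
    have h2 : ‖∫ s in (0:ℝ)..t, (K s (X n s) - K s (X (n+1) s))‖
        ≤ ∫ s in (0:ℝ)..t, ‖K s (X n s) - K s (X (n+1) s)‖ :=
      intervalIntegral.norm_integral_le_integral_norm ht.1
    refine h2.trans ?_
    have hi1 : IntervalIntegrable (fun s => ‖K s (X n s) - K s (X (n+1) s)‖) volume 0 t := by
      apply ContinuousOn.intervalIntegrable
      apply ContinuousOn.norm
      apply ContinuousOn.mono
        ((hInt _ (hXcont n).continuousOn).sub (hInt _ (hXcont (n+1)).continuousOn))
      rw [Set.uIcc_of_le ht.1]; exact Set.Icc_subset_Icc le_rfl ht.2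
    have hi2 : IntervalIntegrable (fun s => ‖X n s - X (n+1) s‖) volume 0 t := by
      apply ContinuousOn.intervalIntegrable
      exact (((hXcont n).sub (hXcont (n+1))).norm).continuousOn
    apply intervalIntegral.integral_mono_on ht.1 hi1 hi2
    intro s hs
    exact hKlip n s ⟨hs.1, hs.2.trans ht.2⟩
  -- initial bound
  obtain ⟨t₀, ht₀, hmax⟩ := isCompact_Icc.exists_isMaxOn (Set.nonempty_Icc.2 zero_le_one)
    (((hXcont 0).sub (hXcont 1)).norm).continuousOn
  set M : ℝ := ‖X 0 t₀ - X 1 t₀‖ with hMdef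
  have hM0 : 0 ≤ M := norm_nonneg _
  have hMb : ∀ t ∈ Set.Icc (0:ℝ) 1, ‖X 0 t - X 1 t‖ ≤ M := fun t ht => hmax ht
  -- the factorial bound
  have hfact : ∀ n, ∀ t ∈ Set.Icc (0:ℝ) 1,
      ‖X n t - X (n+1) t‖ ≤ M * t ^ n / n.factorial := by
    apply picard_bound (fun n t => ‖X n t - X (n+1) t‖) M
    · intro n
      exact (((hXcont n).sub (hXcont (n+1))).norm).continuousOn
    · exact hMb
    · exact fun n t ht => hdiff_rec n t ht
  set d : ℕ → ℝ := fun n => M / n.factorial with hddef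
  have hd_nonneg : ∀ n, 0 ≤ d n := fun n => by positivity
  have hd_sum : Summable d := by
    have := (Real.summable_pow_div_factorial 1).mul_left M
    apply this.congr
    intro n
    simp [hddef, mul_one_div, div_eq_mul_inv]
  have hdistn : ∀ (t : ℝ), t ∈ Set.Icc (0:ℝ) 1 → ∀ n, dist (X n t) (X (n+1) t) ≤ d n := by
    intro t ht n
    rw [dist_eq_norm]
    calc ‖X n t - X (n+1) t‖ ≤ M * t ^ n / n.factorial := hfact n t ht
      _ ≤ M * 1 / n.factorial := by
          gcongr
          exact pow_le_one₀ ht.1 ht.2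
      _ = d n := by rw [hddef]; ring_nf
  -- limit function
  have hcauchy : ∀ t : ℝ, CauchySeq (fun n => X n (σ t)) := fun t =>
    cauchySeq_of_dist_le_of_summable d (fun n => hdistn (σ t) (hσ_mem t) n) hd_sum
  have hxlim : ∀ t : ℝ, ∃ l, Filter.Tendsto (fun n => X n (σ t)) Filter.atTop (nhds l) :=
    fun t => cauchySeq_tendsto_of_complete (hcauchy t)
  choose x hx using hxlim
  have hx' : ∀ t ∈ Set.Icc (0:ℝ) 1,
      Filter.Tendsto (fun n => X n t) Filter.atTop (nhds (x t)) := by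
    intro t ht
    have := hx t
    rwa [hσ_id t ht] at this
  -- tail bounds
  set r : ℕ → ℝ := fun n => ∑' m, d (n + m) with hrdef
  have hdist_lim : ∀ n, ∀ t ∈ Set.Icc (0:ℝ) 1, dist (X n t) (x t) ≤ r n := by
    intro n t ht
    exact dist_le_tsum_of_dist_le_of_tendsto d (hdistn t ht) hd_sum (hx' t ht) n
  have hr0 : Filter.Tendsto r Filter.atTop (nhds 0) := by
    have heq : r = fun n => ∑' m, d (m + n) := by
      funext n
      exact tsum_congr fun m => by rw [add_comm]
    rw [heq]
    exact tendsto_sum_nat_add d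
  -- continuity of the limit
  have hTU : TendstoUniformlyOn (fun n t => X n t) x Filter.atTop (Set.Icc 0 1) := by
    rw [Metric.tendstoUniformlyOn_iff]
    intro ε hε
    filter_upwards [hr0.eventually_lt_const hε] with n hn t ht
    rw [dist_comm]
    exact lt_of_le_of_lt (hdist_lim n t ht) hn
  have hx_cont : ContinuousOn x (Set.Icc 0 1) :=
    hTU.continuousOn (Filter.Eventually.of_forall fun n => (hXcont n).continuousOn).frequently
  -- uniform bound R
  obtain ⟨t₁, ht₁, hmax1⟩ := isCompact_Icc.exists_isMaxOn (Set.nonempty_Icc.2 zero_le_one)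
    ((hXcont 0).norm).continuousOn
  set M0 : ℝ := ‖X 0 t₁‖ with hM0def
  set S : ℝ := ∑' n, d n with hSdef
  have hS0 : 0 ≤ S := tsum_nonneg hd_nonneg
  have hr0S : r 0 = S := by
    rw [hrdef, hSdef]
    exact tsum_congr fun m => by rw [zero_add]
  set R : ℝ := M0 + S with hRdef
  have hXR : ∀ n, ∀ t ∈ Set.Icc (0:ℝ) 1, ‖X n t‖ ≤ R := by
    intro n t ht
    have h1 : dist (X 0 t) (X n t) ≤ ∑ i ∈ Finset.range n, d i := by
      refine (dist_le_range_sum_dist (fun k => X k t) n).trans ?_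
      exact Finset.sum_le_sum fun i _ => hdistn t ht i
    have h2 : ∑ i ∈ Finset.range n, d i ≤ S := hd_sum.sum_le_tsum _ (fun i _ => hd_nonneg i)
    calc ‖X n t‖ ≤ ‖X 0 t‖ + dist (X 0 t) (X n t) := hkey _ _
      _ ≤ M0 + S := add_le_add (hmax1 ht) (h1.trans h2)
  have hxR : ∀ t ∈ Set.Icc (0:ℝ) 1, ‖x t‖ ≤ R := by
    intro t ht
    have h1 : dist (X 0 t) (x t) ≤ S := by
      rw [← hr0S]; exact hdist_lim 0 t ht
    calc ‖x t‖ ≤ ‖X 0 t‖ + dist (X 0 t) (x t) := hkey _ _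
      _ ≤ M0 + S := add_le_add (hmax1 ht) h1
  -- uniform continuity of K on a compact set
  set C : Set (ℝ × EuclideanSpace ℝ (Fin N)) :=
    Set.Icc (0:ℝ) 1 ×ˢ Metric.closedBall (0 : EuclideanSpace ℝ (Fin N)) R with hCdef
  have hCcomp : IsCompact C := isCompact_Icc.prod (isCompact_closedBall _ _)
  have hKuc : UniformContinuousOn (fun p : ℝ × EuclideanSpace ℝ (Fin N) => K p.1 p.2) C :=
    hCcomp.uniformContinuousOn_of_continuous
      (hK.mono (Set.prod_mono le_rfl (Set.subset_univ _)))
  -- the limit is a fixed point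
  have hfix : ∀ t ∈ Set.Icc (0:ℝ) 1, x t = g t + ∫ s in (0:ℝ)..t, K s (x s) := by
    intro t ht
    have hlim1 : Filter.Tendsto (fun n => X (n+1) t) Filter.atTop (nhds (x t)) :=
      (hx' t ht).comp (Filter.tendsto_add_atTop_nat 1)
    have hintlim : Filter.Tendsto (fun n => ∫ s in (0:ℝ)..t, K s (X n s)) Filter.atTop
        (nhds (∫ s in (0:ℝ)..t, K s (x s))) := by
      rw [Metric.tendsto_atTop]
      intro ε hε
      obtain ⟨δ, hδ, hδ'⟩ := Metric.uniformContinuousOn_iff.1 hKuc (ε/2) (half_pos hε)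
      obtain ⟨n₀, hn₀⟩ := Filter.eventually_atTop.1 (hr0.eventually_lt_const hδ)
      refine ⟨n₀, fun n hn => ?_⟩
      have hbound : ∀ s ∈ Set.Icc (0:ℝ) 1, ‖K s (X n s) - K s (x s)‖ ≤ ε/2 := by
        intro s hs
        have hp : ((s, X n s) : ℝ × EuclideanSpace ℝ (Fin N)) ∈ C :=
          ⟨hs, mem_closedBall_zero_iff.2 (hXR n s hs)⟩
        have hq : ((s, x s) : ℝ × EuclideanSpace ℝ (Fin N)) ∈ C :=
          ⟨hs, mem_closedBall_zero_iff.2 (hxR s hs)⟩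
        have hdpq : dist ((s, X n s) : ℝ × EuclideanSpace ℝ (Fin N)) (s, x s) < δ := by
          rw [Prod.dist_eq]
          simp only [dist_self]
          rw [max_eq_right dist_nonneg]
          exact lt_of_le_of_lt (hdist_lim n s hs) (hn₀ n hn)
        have := hδ' _ hp _ hq hdpq
        rw [dist_eq_norm] at this
        exact this.le
      have hi1 := hIntInt _ (hXcont n).continuousOn t ht
      have hi2 := hIntInt x hx_cont t ht
      rw [dist_eq_norm, ← intervalIntegral.integral_sub hi1 hi2]
      have hb2 : ‖∫ s in (0:ℝ)..t, (K s (X n s) - K s (x s))‖ ≤ ε/2 * |t - 0| := by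
        apply intervalIntegral.norm_integral_le_of_norm_le_const
        intro s hs
        rw [Set.uIoc_of_le ht.1] at hs
        exact hbound s ⟨hs.1.le, hs.2.trans ht.2⟩
      have habs : |t - 0| ≤ 1 := by
        rw [sub_zero, abs_of_nonneg ht.1]; exact ht.2
      calc ‖∫ s in (0:ℝ)..t, (K s (X n s) - K s (x s))‖ ≤ ε/2 * |t - 0| := hb2
        _ ≤ ε/2 * 1 := mul_le_mul_of_nonneg_left habs (by linarith)
        _ < ε := by linarith
    have hlim2 : Filter.Tendsto (fun n => X (n+1) t) Filter.atTop
        (nhds (g t + ∫ s in (0:ℝ)..t, K s (x s))) := by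
      have heq : (fun n => X (n+1) t) = fun n => g t + ∫ s in (0:ℝ)..t, K s (X n s) :=
        funext fun n => hXval n t ht
      rw [heq]
      exact hintlim.const_add _
    exact tendsto_nhds_unique hlim1 hlim2
  refine ⟨x, ⟨hx_cont, hfix⟩, ?_⟩
  -- uniqueness
  intro y hy hyfix t ht
  obtain ⟨t₂, ht₂, hmax2⟩ := isCompact_Icc.exists_isMaxOn (Set.nonempty_Icc.2 zero_le_one)
    ((hx_cont.sub hy).norm)
  set H : ℝ := ‖x t₂ - y t₂‖ with hHdef
  have hKxy : ∀ s ∈ Set.Icc (0:ℝ) 1, ‖K s (x s) - K s (y s)‖ ≤ ‖x s - y s‖ := by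
    intro s hs
    apply hL x y hx_cont hy s hs
    have hz : x s - g s - (∫ r in (0:ℝ)..s, K r (x r)) = 0 := by
      rw [hfix s hs]; abel
    rw [hz, norm_zero, mul_zero]
    exact norm_nonneg _
  have hurec : ∀ t ∈ Set.Icc (0:ℝ) 1, ‖x t - y t‖ ≤ ∫ s in (0:ℝ)..t, ‖x s - y s‖ := by
    intro t ht
    have h1 : x t - y t = ∫ s in (0:ℝ)..t, (K s (x s) - K s (y s)) := by
      rw [hfix t ht, hyfix t ht,
        intervalIntegral.integral_sub (hIntInt x hx_cont t ht) (hIntInt y hy t ht)]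
      abel
    rw [h1]
    refine (intervalIntegral.norm_integral_le_integral_norm ht.1).trans ?_
    have hi1 : IntervalIntegrable (fun s => ‖K s (x s) - K s (y s)‖) volume 0 t := by
      apply ContinuousOn.intervalIntegrable
      apply ContinuousOn.norm
      apply ContinuousOn.mono ((hInt x hx_cont).sub (hInt y hy))
      rw [Set.uIcc_of_le ht.1]; exact Set.Icc_subset_Icc le_rfl ht.2
    have hi2 : IntervalIntegrable (fun s => ‖x s - y s‖) volume 0 t := by
      apply ContinuousOn.intervalIntegrable
      apply ContinuousOn.norm
      apply ContinuousOn.mono (hx_cont.sub hy)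
      rw [Set.uIcc_of_le ht.1]; exact Set.Icc_subset_Icc le_rfl ht.2
    apply intervalIntegral.integral_mono_on ht.1 hi1 hi2
    intro s hs
    exact hKxy s ⟨hs.1, hs.2.trans ht.2⟩
  have hb := picard_bound (fun _ t => ‖x t - y t‖) H
    (fun _ => (hx_cont.sub hy).norm) (fun t ht => hmax2 ht) (fun n t ht => hurec t ht)
  have hten : Filter.Tendsto (fun n : ℕ => H / n.factorial) Filter.atTop (nhds 0) := by
    have hsum : Summable (fun n : ℕ => H / n.factorial) := by
      have := (Real.summable_pow_div_factorial 1).mul_left H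
      apply this.congr
      intro n
      simp [mul_one_div, div_eq_mul_inv]
    exact hsum.tendsto_atTop_zero
  have hle : ∀ n : ℕ, ‖x t - y t‖ ≤ H / n.factorial := by
    intro n
    calc ‖x t - y t‖ ≤ H * t ^ n / n.factorial := hb n t ht
      _ ≤ H * 1 / n.factorial := by
          have hH0 : (0:ℝ) ≤ H := norm_nonneg _
          gcongr
          exact pow_le_one₀ ht.1 ht.2
      _ = H / n.factorial := by ring
  have h0 : ‖x t - y t‖ ≤ 0 := ge_of_tendsto hten (Filter.Eventually.of_forall hle)
  have hz : x t - y t = 0 := norm_le_zero_iff.1 h0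
  exact (sub_eq_zero.1 hz).symm
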